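/- The first sine Fourier coefficient of the piecewise-constant friction applied to a shifted sinusoid is (1/π) ∫_{-θ}^{2π-θ} σ_DF(a + cos(s + θ)) sin(s) ds = (2(1+Δ)/π) sin(θ) √(1 - a²). -/

import Mathlib

open Real MeasureTheory

theorem stmt_4 (Δ a θ : ℝ) (hΔ : 0 < Δ) (hΔ1 : Δ < 1) (ha : 0 < a) (ha1 : a < 1)
    (σDF : ℝ → ℝ) (hσ : ∀ v : ℝ, σDF v = if v ≥ 0 then -Δ else 1) :
    (1 / π) * ∫ s in (-θ)..(2 * π - θ), σDF (a + Real.cos (s + θ)) * Real.sin s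
      = (2 * (1 + Δ) / π) * Real.sin θ * Real.sqrt (1 - a ^ 2) := by
  have hπ : (0:ℝ) < π := Real.pi_pos
  set c := Real.arccos (-a) with hc
  have hma1 : (-1:ℝ) ≤ -a := by linarith
  have hma2 : -a ≤ 1 := by linarith
  have hcosc : Real.cos c = -a := Real.cos_arccos hma1 hma2
  have hsinc : Real.sin c = Real.sqrt (1 - a ^ 2) := by
    rw [hc, Real.sin_arccos, neg_sq]
  have hc0 : 0 < c := Real.arccos_pos.2 (by linarith)
  have hcπ : c < π := by
    refine lt_of_le_of_ne (Real.arccos_le_pi _) fun h => ?_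
    have := Real.arccos_eq_pi.mp h
    linarith
  -- step 1 : substitution t = s + θ
  have hstep1 : (∫ s in (-θ)..(2*π-θ), σDF (a + Real.cos (s+θ)) * Real.sin s)
      = ∫ t in (0:ℝ)..(2*π), σDF (a + Real.cos t) * Real.sin (t - θ) := by
    have h := intervalIntegral.integral_comp_add_right (a := -θ) (b := 2*π-θ)
      (f := fun t => σDF (a + Real.cos t) * Real.sin (t - θ)) θ
    simp only [add_sub_cancel_right, neg_add_cancel, sub_add_cancel] at h
    rw [← h]
  -- measurability and integrability
  have hσfun : σDF = fun v => if v ≥ 0 then -Δ else 1 := funext hσ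
  have hmeas : Measurable fun t => σDF (a + Real.cos t) * Real.sin (t - θ) := by
    rw [hσfun]
    refine Measurable.mul ?_ (Real.measurable_sin.comp (measurable_id.sub measurable_const))
    exact (Measurable.ite (measurableSet_le measurable_const measurable_id)
      measurable_const measurable_const).comp (measurable_const.add Real.measurable_cos)
  have hint : ∀ p q : ℝ, IntervalIntegrable
      (fun t => σDF (a + Real.cos t) * Real.sin (t - θ)) volume p q := by
    intro p q
    rw [intervalIntegrable_iff]
    refine ((integrableOn_const_iff (C := (1:ℝ))).2 (Or.inr measure_Ioc_lt_top)).mono'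
      hmeas.aestronglyMeasurable.restrict ?_
    filter_upwards with t
    rw [Real.norm_eq_abs, abs_mul, hσ]
    have h1 : |Real.sin (t - θ)| ≤ 1 := Real.abs_sin_le_one _
    have h2 : |if a + Real.cos t ≥ 0 then -Δ else 1| ≤ 1 := by
      split <;> rw [abs_le] <;> constructor <;> linarith
    calc |if a + Real.cos t ≥ 0 then -Δ else 1| * |Real.sin (t - θ)|
        ≤ 1 * 1 := mul_le_mul h2 h1 (abs_nonneg _) (by norm_num)
      _ = 1 := by norm_num
  -- elementary integral
  have hval : ∀ k p q : ℝ, (∫ t in p..q, k * Real.sin (t - θ))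
      = k * (Real.cos (p - θ) - Real.cos (q - θ)) := by
    intro k p q
    rw [intervalIntegral.integral_const_mul]
    congr 1
    rw [intervalIntegral.integral_comp_sub_right (fun x => Real.sin x) θ,
      integral_sin]
  -- piece 1
  have hp1 : (∫ t in (0:ℝ)..c, σDF (a + Real.cos t) * Real.sin (t - θ))
      = ∫ t in (0:ℝ)..c, (-Δ) * Real.sin (t - θ) := by
    apply intervalIntegral.integral_congr
    intro x hx
    rw [Set.uIcc_of_le hc0.le] at hx
    have hcc : Real.cos c ≤ Real.cos x :=
      Real.cos_le_cos_of_nonneg_of_le_pi hx.1 hcπ.le hx.2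
    show σDF (a + Real.cos x) * Real.sin (x - θ) = -Δ * Real.sin (x - θ)
    rw [hσ, if_pos (by rw [hcosc] at hcc; linarith)]
  -- piece 3
  have hp3 : (∫ t in (2*π - c)..(2*π), σDF (a + Real.cos t) * Real.sin (t - θ))
      = ∫ t in (2*π - c)..(2*π), (-Δ) * Real.sin (t - θ) := by
    apply intervalIntegral.integral_congr
    intro x hx
    rw [Set.uIcc_of_le (by linarith : 2*π - c ≤ 2*π)] at hx
    have hcc : Real.cos c ≤ Real.cos (2*π - x) :=
      Real.cos_le_cos_of_nonneg_of_le_pi (by linarith [hx.2]) hcπ.le (by linarith [hx.1])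
    have h2x : Real.cos (2*π - x) = Real.cos x := by
      rw [Real.cos_sub]; simp
    rw [h2x, hcosc] at hcc
    show σDF (a + Real.cos x) * Real.sin (x - θ) = -Δ * Real.sin (x - θ)
    rw [hσ, if_pos (by linarith)]
  -- piece 2
  have hp2 : (∫ t in c..(2*π - c), σDF (a + Real.cos t) * Real.sin (t - θ))
      = ∫ t in c..(2*π - c), 1 * Real.sin (t - θ) := by
    apply intervalIntegral.integral_congr_ae
    have hne : ∀ᵐ x : ℝ, x ≠ 2*π - c := by
      rw [MeasureTheory.ae_iff]
      simp
    filter_upwards [hne] with x hxne hx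
    rw [Set.uIoc_of_le (by linarith : c ≤ 2*π - c)] at hx
    have hlt : Real.cos x < -a := by
      have hx2 : x < 2*π - c := lt_of_le_of_ne hx.2 hxne
      rcases le_or_gt x π with h | h
      · have := Real.strictAntiOn_cos ⟨hc0.le, hcπ.le⟩ ⟨by linarith [hx.1], h⟩ hx.1
        rwa [hcosc] at this
      · have h2x : Real.cos (2*π - x) = Real.cos x := by
          rw [Real.cos_sub]; simp
        have := Real.strictAntiOn_cos ⟨hc0.le, hcπ.le⟩
          ⟨by linarith, by linarith⟩ (by linarith : c < 2*π - x)
        rw [hcosc, h2x] at this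
        exact this
    show σDF (a + Real.cos x) * Real.sin (x - θ) = 1 * Real.sin (x - θ)
    rw [hσ, if_neg (by push_neg; linarith)]
  rw [hstep1,
    ← intervalIntegral.integral_add_adjacent_intervals (hint 0 c) (hint c (2*π)),
    ← intervalIntegral.integral_add_adjacent_intervals (hint c (2*π - c)) (hint (2*π - c) (2*π)),
    hp1, hp2, hp3, hval, hval, hval]
  have e1 : Real.cos (0 - θ) = Real.cos θ := by rw [zero_sub, Real.cos_neg]
  have e2 : Real.cos (2*π - c - θ) = Real.cos (c + θ) := by
    have h : 2*π - c - θ = 2*π - (c + θ) := by ring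
    rw [h, Real.cos_sub]; simp
  have e3 : Real.cos (2*π - θ) = Real.cos θ := by rw [Real.cos_sub]; simp
  rw [e1, e2, e3, Real.cos_add, Real.cos_sub, hsinc]
  field_simp
  ring
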